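/- For each c ≥ 3, the total number of even-length sequences of nonzero integers with 2·Σ|a_i| − ℓ = c equals e(c) = (2/3)·(2^{c−2} − (−1)^{c−2}). -/
import Mathlib


open Classical

/-- The number of sign changes in a finite sequence of integers. -/
def signChanges (l : List ℤ) : ℕ :=
  ((l.zip l.tail).filter (fun p => p.1 * p.2 < 0)).length

/-- The sum of the absolute values of the entries. -/
def absSum (l : List ℤ) : ℕ := (l.map Int.natAbs).sum

/-- An even continued fraction representation: a nonempty even-length
sequence of nonzero integers. -/
def IsECF (l : List ℤ) : Prop :=
  l ≠ [] ∧ Even l.length ∧ ∀ x ∈ l, x ≠ 0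

/-- Palindromic or anti-palindromic sequences. -/
def IsPalOrAnti (l : List ℤ) : Prop :=
  l.reverse = l ∨ l.reverse = l.map (fun x => -x)

/-- The set `E(c)` of even continued fractions with crossing number `c`. -/
def Ecross (c : ℕ) : Set (List ℤ) :=
  {l | IsECF l ∧ (2 * absSum l : ℤ) - signChanges l = c}

/-- The set `E(c,b)` of even continued fractions with crossing number `c`
and braid index `b`. -/
def Eset (c b : ℕ) : Set (List ℤ) :=
  {l | IsECF l ∧ (2 * absSum l : ℤ) - signChanges l = c ∧
    (absSum l : ℤ) - signChanges l + 1 = b}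

noncomputable def e (c b : ℕ) : ℕ := (Eset c b).ncard

noncomputable def eTot (c : ℕ) : ℕ := (Ecross c).ncard

noncomputable def ep (c b : ℕ) : ℕ := (Eset c b ∩ {l | IsPalOrAnti l}).ncard

noncomputable def epTot (c : ℕ) : ℕ := (Ecross c ∩ {l | IsPalOrAnti l}).ncard

namespace ETA
def wgt (s : ℤ) (t : List ℤ) : ℤ := 2 * absSum t - signChanges (s :: t)

lemma signChanges_cons_cons (a b : ℤ) (t : List ℤ) :
    signChanges (a :: b :: t) = (if a * b < 0 then 1 else 0) + signChanges (b :: t) := by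
  simp only [signChanges, List.zip, List.tail_cons, List.zipWith_cons_cons, List.filter]
  split <;> simp_all <;> omega

lemma wgt_nil (s : ℤ) : wgt s [] = 0 := rfl

lemma absSum_cons (a : ℤ) (t : List ℤ) : absSum (a :: t) = a.natAbs + absSum t := rfl

lemma wgt_cons (s a : ℤ) (t : List ℤ) :
    wgt s (a :: t) = 2 * (a.natAbs : ℤ) - (if s * a < 0 then 1 else 0) + wgt a t := by
  simp only [wgt, absSum_cons, signChanges_cons_cons s a t]
  push_cast
  split <;> ring

lemma sign_mul_iff {s s' a : ℤ} (h : 0 < s * s') : (s * a < 0 ↔ s' * a < 0) := by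
  rcases lt_trichotomy s 0 with hs | hs | hs <;> rcases lt_trichotomy s' 0 with hs' | hs' | hs' <;>
    first
      | (exfalso; nlinarith)
      | (constructor <;> intro hh <;> nlinarith)

lemma wgt_congr {s s' : ℤ} (h : 0 < s * s') (t : List ℤ) : wgt s t = wgt s' t := by
  cases t with
  | nil => rfl
  | cons a t => rw [wgt_cons, wgt_cons, if_congr (sign_mul_iff h) rfl rfl]

def NZ (t : List ℤ) : Prop := ∀ x ∈ t, x ≠ 0

lemma length_le_wgt {t : List ℤ} (hnz : NZ t) (s : ℤ) : (t.length : ℤ) ≤ wgt s t := by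
  induction t generalizing s with
  | nil => simp [wgt_nil]
  | cons a r ih =>
    have ha : a ≠ 0 := hnz a (by simp)
    have h1 : (1 : ℤ) ≤ (a.natAbs : ℤ) := by
      have := Int.natAbs_pos.mpr ha; exact_mod_cast this
    have := ih (fun x hx => hnz x (List.mem_cons_of_mem _ hx)) a
    rw [wgt_cons]
    simp only [List.length_cons]
    rw [Nat.cast_add, Nat.cast_one]
    split <;> omega

lemma wgt_neg (s : ℤ) (t : List ℤ) : wgt (-s) (t.map (fun x => -x)) = wgt s t := by
  induction t generalizing s with
  | nil => rfl
  | cons a r ih =>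
    simp only [List.map_cons, wgt_cons, Int.natAbs_neg, neg_mul_neg, ih a]
end ETA

namespace ETA2
open ETA

lemma signChanges_cons_le (s : ℤ) (t : List ℤ) : signChanges (s :: t) ≤ t.length := by
  calc (((s::t).zip t).filter (fun p => p.1 * p.2 < 0)).length ≤ ((s::t).zip t).length :=
        List.length_filter_le _ _
    _ ≤ t.length := by rw [List.length_zip]; omega

lemma absSum_le {s : ℤ} {t : List ℤ} {k : ℕ} (hnz : NZ t) (hw : wgt s t = k) :
    absSum t ≤ k := by
  have h1 := length_le_wgt hnz s
  have h2 := signChanges_cons_le s t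
  have : 2 * (absSum t : ℤ) = wgt s t + signChanges (s :: t) := by simp [wgt]
  omega

lemma entry_le {t : List ℤ} {x : ℤ} (hx : x ∈ t) : x.natAbs ≤ absSum t := by
  induction t with
  | nil => simp at hx
  | cons a r ih =>
    rcases List.mem_cons.mp hx with rfl | hx'
    · simp [absSum_cons]
    · have := ih hx'; simp [absSum_cons]; omega

lemma fin_wgt (s : ℤ) (k : ℕ) : {t : List ℤ | NZ t ∧ wgt s t = k}.Finite := by
  classical
  set B : Set ℤ := {x : ℤ | x.natAbs ≤ k} with hB
  have hBfin : B.Finite := by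
    apply (Set.finite_Icc (-(k:ℤ)) k).subset
    intro x hx
    simp only [hB, Set.mem_setOf_eq] at hx
    simp only [Set.mem_Icc]
    omega
  haveI : Finite ↥B := hBfin.to_subtype
  have hfin : {l : List ↥B | l.length ≤ k}.Finite := List.finite_length_le _ _
  apply (hfin.image (fun l => l.map Subtype.val)).subset
  intro t ht
  obtain ⟨hnz, hw⟩ := ht
  have hlen : t.length ≤ k := by
    have := length_le_wgt hnz s; rw [hw] at this; exact_mod_cast this
  have hbound : ∀ x ∈ t, x.natAbs ≤ k := fun x hx =>
    le_trans (entry_le hx) (absSum_le hnz hw)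
  refine ⟨t.attach.map (fun x => ⟨x.1, hbound x.1 x.2⟩), ?_, ?_⟩
  · simp only [Set.mem_setOf_eq, List.length_map, List.length_attach]; exact hlen
  · simp [List.map_map]

namespace ETA3
open ETA ETA2

def incr : List ℤ → List ℤ
  | [] => []
  | a :: t => (a + a.sign) :: t

lemma sign_cases {a : ℤ} (ha : a ≠ 0) : (0 < a ∧ a.sign = 1) ∨ (a < 0 ∧ a.sign = -1) := by
  rcases lt_or_gt_of_ne ha with h | h
  · exact Or.inr ⟨h, Int.sign_eq_neg_one_of_neg h⟩
  · exact Or.inl ⟨h, Int.sign_eq_one_of_pos h⟩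

lemma addsign_ne {a : ℤ} (ha : a ≠ 0) : a + a.sign ≠ 0 := by
  rcases sign_cases ha with ⟨h, hs⟩ | ⟨h, hs⟩ <;> rw [hs] <;> omega

lemma addsign_natAbs {a : ℤ} (ha : a ≠ 0) : (a + a.sign).natAbs = a.natAbs + 1 := by
  rcases sign_cases ha with ⟨h, hs⟩ | ⟨h, hs⟩ <;> rw [hs] <;> omega

lemma addsign_samesign {a : ℤ} (ha : a ≠ 0) : 0 < a * (a + a.sign) := by
  rcases sign_cases ha with ⟨h, hs⟩ | ⟨h, hs⟩ <;> rw [hs] <;> nlinarith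

lemma addsign_inj {a b : ℤ} (ha : a ≠ 0) (hb : b ≠ 0) (h : a + a.sign = b + b.sign) :
    a = b := by
  rcases sign_cases ha with ⟨h1, hs1⟩ | ⟨h1, hs1⟩ <;> rcases sign_cases hb with ⟨h2, hs2⟩ | ⟨h2, hs2⟩ <;>
    rw [hs1, hs2] at h <;> omega

lemma subsign_ne {a : ℤ} (ha : 2 ≤ a.natAbs) : a - a.sign ≠ 0 := by
  have ha0 : a ≠ 0 := by omega
  rcases sign_cases ha0 with ⟨h, hs⟩ | ⟨h, hs⟩ <;> rw [hs] <;> omega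

lemma subsign_addsign {a : ℤ} (ha : 2 ≤ a.natAbs) : (a - a.sign) + (a - a.sign).sign = a := by
  have ha0 : a ≠ 0 := by omega
  rcases sign_cases ha0 with ⟨h, hs⟩ | ⟨h, hs⟩ <;>
    rw [hs] <;>
    [rw [Int.sign_eq_one_of_pos (by omega)]; rw [Int.sign_eq_neg_one_of_neg (by omega)]] <;>
    ring

lemma wgt_incr_cons {s a : ℤ} (ha : a ≠ 0) (t : List ℤ) :
    wgt s ((a + a.sign) :: t) = wgt s (a :: t) + 2 := by
  have hpos : 0 < (a + a.sign) * a := by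
    have := addsign_samesign ha; nlinarith
  rw [wgt_cons, wgt_cons, addsign_natAbs ha, wgt_congr hpos t, mul_comm s (a + a.sign),
    mul_comm s a, if_congr (sign_mul_iff hpos) rfl rfl]
  push_cast; ring

end ETA3

namespace ETA4
open ETA ETA2 ETA3

lemma wgt_nonneg {t : List ℤ} (hnz : NZ t) (s : ℤ) : 0 ≤ wgt s t :=
  le_trans (by positivity) (length_le_wgt hnz s)

lemma fin_wgt' (s : ℤ) (k : ℤ) : {t : List ℤ | NZ t ∧ wgt s t = k}.Finite := by
  rcases le_or_gt 0 k with h | h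
  · obtain ⟨n, rfl⟩ := Int.eq_ofNat_of_zero_le h; exact fin_wgt s n
  · convert Set.finite_empty
    ext t
    simp only [Set.mem_setOf_eq, Set.mem_empty_iff_false, iff_false, not_and]
    intro hnz hw
    have := wgt_nonneg hnz s
    omega

def PSet (p : ℕ) (s : ℤ) (k : ℕ) : Set (List ℤ) :=
  {t | t.length % 2 = p ∧ NZ t ∧ wgt s t = k}

lemma PSet_fin (p : ℕ) (s : ℤ) (k : ℕ) : (PSet p s k).Finite :=
  (fin_wgt s k).subset (fun _ ht => ⟨ht.2.1, ht.2.2⟩)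

lemma not_nil_mem_PSet {p : ℕ} {s : ℤ} {k : ℕ} (hk : k ≠ 0) : [] ∉ PSet p s k := by
  intro h
  have := h.2.2
  rw [wgt_nil] at this
  omega

lemma PSet_decomp {s : ℤ} (hs : s = 1 ∨ s = -1) {p q : ℕ} (hpq : p + q = 1) (k : ℕ) :
    PSet p s (k + 2) =
      ((s :: ·) '' PSet q s k) ∪ ((-s :: ·) '' PSet q (-s) (k + 1)) ∪
        (incr '' (PSet p s k \ {[]})) := by
  have hss : ¬ s * s < 0 := by rcases hs with rfl | rfl <;> norm_num
  have hsns : s * (-s) < 0 := by rcases hs with rfl | rfl <;> norm_num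
  have habs : s.natAbs = 1 := by rcases hs with rfl | rfl <;> norm_num
  ext t
  constructor
  · rintro ⟨hpar, hnz, hw⟩
    match t with
    | [] => rw [wgt_nil] at hw; omega
    | a :: r =>
      have ha : a ≠ 0 := hnz a (by simp)
      have hnzr : NZ r := fun x hx => hnz x (List.mem_cons_of_mem _ hx)
      have hwc := wgt_cons s a r
      simp only [List.length_cons] at hpar
      have hcases : a = s ∨ a = -s ∨ 2 ≤ a.natAbs := by
        rcases hs with rfl | rfl <;> omega
      rcases hcases with rfl | rfl | h2
      · left; left
        refine ⟨r, ⟨by omega, hnzr, ?_⟩, rfl⟩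
        rw [hw, if_neg hss, habs] at hwc
        push_cast at hwc
        omega
      · left; right
        refine ⟨r, ⟨by omega, hnzr, ?_⟩, rfl⟩
        rw [hw, if_pos hsns, Int.natAbs_neg, habs] at hwc
        push_cast at hwc
        omega
      · right
        have ha' : a - a.sign ≠ 0 := subsign_ne h2
        refine ⟨(a - a.sign) :: r, ⟨⟨by simpa using hpar, ?_, ?_⟩, by simp⟩, ?_⟩
        · intro x hx
          rcases List.mem_cons.mp hx with rfl | hx'
          · exact ha'
          · exact hnzr x hx'
        · have := wgt_incr_cons (s := s) ha' r
          rw [subsign_addsign h2] at this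
          omega
        · simp only [incr, subsign_addsign h2]
  · intro h
    rcases h with (⟨r, hr, rfl⟩ | ⟨r, hr, rfl⟩) | ⟨x, hx, rfl⟩
    · obtain ⟨hpar, hnz, hw⟩ := hr
      refine ⟨by simp only [List.length_cons]; omega, ?_, ?_⟩
      · intro x hx
        rcases List.mem_cons.mp hx with rfl | hx'
        · rcases hs with rfl | rfl <;> norm_num
        · exact hnz x hx'
      · rw [wgt_cons, if_neg hss, habs, hw]; push_cast; ring
    · obtain ⟨hpar, hnz, hw⟩ := hr
      refine ⟨by simp only [List.length_cons]; omega, ?_, ?_⟩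
      · intro x hx
        rcases List.mem_cons.mp hx with rfl | hx'
        · rcases hs with rfl | rfl <;> simp
        · exact hnz x hx'
      · rw [wgt_cons, if_pos hsns, Int.natAbs_neg, habs, hw]; push_cast; ring
    · obtain ⟨⟨hpar, hnz, hw⟩, hne⟩ := hx
      have hne' : x ≠ [] := by simpa using hne
      obtain ⟨a, r, rfl⟩ := List.exists_cons_of_ne_nil hne'
      have ha : a ≠ 0 := hnz a (by simp)
      refine ⟨?_, ?_, ?_⟩
      · simpa [incr] using hpar
      · intro y hy
        simp only [incr] at hy
        rcases List.mem_cons.mp hy with rfl | hy'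
        · exact addsign_ne ha
        · exact hnz y (List.mem_cons_of_mem _ hy')
      · show wgt s (incr (a :: r)) = _
        simp only [incr]
        rw [wgt_incr_cons ha, hw]
        push_cast; ring

lemma incr_injOn {p : ℕ} {s : ℤ} {k : ℕ} : Set.InjOn incr (PSet p s k \ {[]}) := by
  rintro x ⟨⟨-, hnzx, -⟩, hnex⟩ y ⟨⟨-, hnzy, -⟩, hney⟩ h
  obtain ⟨a, r, rfl⟩ := List.exists_cons_of_ne_nil (by simpa using hnex)
  obtain ⟨b, q, rfl⟩ := List.exists_cons_of_ne_nil (by simpa using hney)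
  simp only [incr, List.cons.injEq] at h
  obtain ⟨h1, rfl⟩ := h
  rw [addsign_inj (hnzx a (by simp)) (hnzy b (by simp)) h1]

lemma head_of_mem_cons_image {x : ℤ} {S : Set (List ℤ)} {t : List ℤ}
    (h : t ∈ (x :: ·) '' S) : ∃ r, t = x :: r := by
  obtain ⟨r, -, rfl⟩ := h; exact ⟨r, rfl⟩

lemma PSet_card_rec {s : ℤ} (hs : s = 1 ∨ s = -1) {p q : ℕ} (hpq : p + q = 1) (k : ℕ) :
    (PSet p s (k + 2)).ncard =
      (PSet q s k).ncard + (PSet q (-s) (k + 1)).ncard + (PSet p s k \ {[]}).ncard := by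
  have habs : s.natAbs = 1 := by rcases hs with rfl | rfl <;> norm_num
  have fin1 : ((s :: ·) '' PSet q s k).Finite := (PSet_fin q s k).image _
  have fin2 : ((-s :: ·) '' PSet q (-s) (k + 1)).Finite := (PSet_fin q (-s) (k+1)).image _
  have fin3 : (incr '' (PSet p s k \ {[]})).Finite :=
    ((PSet_fin p s k).subset Set.diff_subset).image _
  have d12 : Disjoint ((s :: ·) '' PSet q s k) ((-s :: ·) '' PSet q (-s) (k + 1)) := by
    rw [Set.disjoint_left]
    rintro t h1 h2
    obtain ⟨r, rfl⟩ := head_of_mem_cons_image h1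
    obtain ⟨r', heq⟩ := head_of_mem_cons_image h2
    have hh : s = -s := (List.cons.injEq _ _ _ _ ▸ heq).1
    rcases hs with rfl | rfl <;> omega
  have d3 : Disjoint (((s :: ·) '' PSet q s k) ∪ ((-s :: ·) '' PSet q (-s) (k + 1)))
      (incr '' (PSet p s k \ {[]})) := by
    rw [Set.disjoint_left]
    rintro t h1 ⟨x, ⟨⟨-, hnz, -⟩, hne⟩, rfl⟩
    obtain ⟨a, r, rfl⟩ := List.exists_cons_of_ne_nil (by simpa using hne)
    have ha : a ≠ 0 := hnz a (by simp)
    have h2 : (a + a.sign).natAbs = a.natAbs + 1 := addsign_natAbs ha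
    have hge : 2 ≤ (a + a.sign).natAbs := by omega
    rcases h1 with h1 | h1
    · obtain ⟨r', heq⟩ := head_of_mem_cons_image h1
      simp only [incr, List.cons.injEq] at heq
      rw [heq.1] at hge; omega
    · obtain ⟨r', heq⟩ := head_of_mem_cons_image h1
      simp only [incr, List.cons.injEq] at heq
      rw [heq.1] at hge
      rw [Int.natAbs_neg] at hge
      omega
  rw [PSet_decomp hs hpq k, Set.ncard_union_eq d3 (fin1.union fin2) fin3,
    Set.ncard_union_eq d12 fin1 fin2,
    Set.ncard_image_of_injective _ (List.cons_injective),
    Set.ncard_image_of_injective _ (List.cons_injective),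
    Set.ncard_image_of_injOn incr_injOn]

lemma PSet_neg (p : ℕ) (s : ℤ) (k : ℕ) :
    (List.map (fun x => -x)) '' PSet p s k = PSet p (-s) k := by
  ext t
  constructor
  · rintro ⟨r, ⟨hpar, hnz, hw⟩, rfl⟩
    refine ⟨by simpa using hpar, ?_, by rw [wgt_neg]; exact hw⟩
    intro x hx
    obtain ⟨y, hy, rfl⟩ := List.mem_map.mp hx
    simpa using hnz y hy
  · rintro ⟨hpar, hnz, hw⟩
    refine ⟨t.map (fun x => -x), ⟨by simpa using hpar, ?_, ?_⟩, by simp⟩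
    · intro x hx
      obtain ⟨y, hy, rfl⟩ := List.mem_map.mp hx
      simpa using hnz y hy
    · have h2 := wgt_neg (-s) t
      rw [neg_neg] at h2
      rw [h2]
      exact hw

lemma PSet_neg_card (p : ℕ) (s : ℤ) (k : ℕ) : (PSet p (-s) k).ncard = (PSet p s k).ncard := by
  rw [← PSet_neg p s k]
  exact Set.ncard_image_of_injective _ (List.map_injective_iff.mpr (fun a b => neg_inj.mp))

noncomputable def nn (k : ℕ) : ℕ := (PSet 1 1 k).ncard
noncomputable def mm (k : ℕ) : ℕ := (PSet 0 1 k).ncard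

lemma nil_notMem_odd (s : ℤ) (k : ℕ) : [] ∉ PSet 1 s k := by
  rintro ⟨hpar, -, -⟩
  simp at hpar

lemma PSet_zero_even (s : ℤ) : PSet 0 s 0 = {[]} := by
  ext t
  constructor
  · rintro ⟨hpar, hnz, hw⟩
    have := length_le_wgt hnz s
    rw [hw] at this
    have : t.length = 0 := by omega
    simpa [List.length_eq_zero_iff] using this
  · rintro rfl
    exact ⟨by simp, by intro x hx; simp at hx, wgt_nil s⟩

lemma PSet_zero_odd (s : ℤ) : PSet 1 s 0 = ∅ := by
  ext t
  simp only [Set.mem_empty_iff_false, iff_false]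
  rintro ⟨hpar, hnz, hw⟩
  have := length_le_wgt hnz s
  rw [hw] at this
  have : t.length = 0 := by omega
  omega

lemma PSet_one_even (s : ℤ) : PSet 0 s 1 = ∅ := by
  ext t
  simp only [Set.mem_empty_iff_false, iff_false]
  rintro ⟨hpar, hnz, hw⟩
  have := length_le_wgt hnz s
  rw [hw] at this
  have hl : t.length = 0 := by omega
  rw [List.length_eq_zero_iff] at hl
  subst hl
  rw [wgt_nil] at hw
  omega

lemma PSet_one_odd : PSet 1 1 1 = {[-1]} := by
  ext t
  constructor
  · rintro ⟨hpar, hnz, hw⟩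
    have := length_le_wgt hnz 1
    rw [hw] at this
    have hl : t.length = 1 := by omega
    obtain ⟨a, rfl⟩ := List.length_eq_one_iff.mp hl
    have ha : a ≠ 0 := hnz a (by simp)
    rw [wgt_cons, wgt_nil, one_mul] at hw
    have : ¬ (2 * (a.natAbs : ℤ) - (if a < 0 then 1 else 0) + 0 = 1 → False) := by
      intro hcon; exact hcon hw
    split at hw <;> simp only [Set.mem_singleton_iff, List.cons.injEq, and_true] <;> omega
  · rintro rfl
    refine ⟨by simp, by intro x hx; simp at hx; omega, ?_⟩
    rw [wgt_cons, wgt_nil]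
    norm_num

lemma nn_rec (k : ℕ) : nn (k + 2) = mm k + mm (k + 1) + nn k := by
  have h := PSet_card_rec (Or.inl rfl) (p := 1) (q := 0) rfl k
  rw [Set.diff_singleton_eq_self (nil_notMem_odd 1 k)] at h
  rw [nn, h, PSet_neg_card]
  rfl

lemma mm_rec (k : ℕ) :
    mm (k + 2) = nn k + nn (k + 1) + (PSet 0 1 k \ {[]}).ncard := by
  have h := PSet_card_rec (Or.inl rfl) (p := 0) (q := 1) rfl k
  rw [mm, h, PSet_neg_card]
  rfl

noncomputable def cross (l : List ℤ) : ℤ := 2 * (absSum l : ℤ) - signChanges l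

lemma cross_cons (a : ℤ) (r : List ℤ) :
    cross (a :: r) = 2 * (a.natAbs : ℤ) + wgt a r := by
  simp only [cross, wgt, absSum_cons]
  push_cast
  ring

lemma signChanges_le_cons (s : ℤ) (l : List ℤ) :
    signChanges l ≤ signChanges (s :: l) ∧ signChanges (s :: l) ≤ signChanges l + 1 := by
  cases l with
  | nil => simp [signChanges]
  | cons a r =>
    rw [signChanges_cons_cons]
    split <;> omega

lemma mem_Ecross_iff (c : ℕ) (l : List ℤ) :
    l ∈ Ecross c ↔ (l ≠ [] ∧ Even l.length ∧ NZ l) ∧ cross l = c := Iff.rfl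

lemma Ecross_fin (c : ℕ) : (Ecross c).Finite := by
  apply ((fin_wgt' 1 c).union (fin_wgt' 1 ((c : ℤ) - 1))).subset
  rintro l ⟨⟨hne, heven, hnz⟩, hc⟩
  have h1 := signChanges_le_cons 1 l
  have : wgt 1 l = (c : ℤ) ∨ wgt 1 l = (c : ℤ) - 1 := by
    simp only [wgt, cross] at hc ⊢
    omega
  rcases this with h | h
  · exact Or.inl ⟨hnz, h⟩
  · exact Or.inr ⟨hnz, h⟩

lemma Ecross_decomp (c : ℕ) :
    Ecross (c + 2) =
      ((1 :: ·) '' PSet 1 1 c) ∪ (((-1) :: ·) '' PSet 1 (-1) c) ∪ (incr '' Ecross c) := by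
  ext t
  constructor
  · rintro ⟨⟨hne, heven, hnz⟩, hc⟩
    obtain ⟨a, r, rfl⟩ := List.exists_cons_of_ne_nil hne
    have ha : a ≠ 0 := hnz a (by simp)
    have hnzr : NZ r := fun x hx => hnz x (List.mem_cons_of_mem _ hx)
    have hpar : r.length % 2 = 1 := by
      rw [Nat.even_iff] at heven
      simp only [List.length_cons] at heven
      omega
    replace hc : cross (a :: r) = ((c + 2 : ℕ) : ℤ) := hc
    rw [cross_cons] at hc
    have hcases : a = 1 ∨ a = -1 ∨ 2 ≤ a.natAbs := by omega
    rcases hcases with rfl | rfl | h2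
    · left; left
      refine ⟨r, ⟨hpar, hnzr, ?_⟩, rfl⟩
      simp only [Int.natAbs_one] at hc
      push_cast at hc ⊢
      omega
    · left; right
      refine ⟨r, ⟨hpar, hnzr, ?_⟩, rfl⟩
      simp only [Int.natAbs_neg, Int.natAbs_one] at hc
      push_cast at hc ⊢
      omega
    · right
      have ha' : a - a.sign ≠ 0 := subsign_ne h2
      have hkey := subsign_addsign h2
      refine ⟨(a - a.sign) :: r, ⟨⟨by simp, ?_, ?_⟩, ?_⟩, by simp [incr, hkey]⟩
      · simp only [List.length_cons] at heven ⊢; exact heven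
      · intro x hx
        rcases List.mem_cons.mp hx with rfl | hx'
        · exact ha'
        · exact hnzr x hx'
      · show cross ((a - a.sign) :: r) = (c : ℤ)
        rw [cross_cons]
        have hab : (a - a.sign + (a - a.sign).sign).natAbs = (a - a.sign).natAbs + 1 :=
          addsign_natAbs ha'
        rw [hkey] at hab
        have hwr : wgt (a - a.sign) r = wgt a r := by
          apply wgt_congr
          have := addsign_samesign ha'
          rw [hkey] at this
          exact this
        rw [hwr]
        omega
  · intro h
    rcases h with (⟨r, hr, rfl⟩ | ⟨r, hr, rfl⟩) | ⟨x, hx, rfl⟩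
    · obtain ⟨hpar, hnz, hw⟩ := hr
      refine ⟨⟨by simp, ?_, ?_⟩, ?_⟩
      · rw [Nat.even_iff]; simp only [List.length_cons]; omega
      · intro x hx
        rcases List.mem_cons.mp hx with rfl | hx'
        · norm_num
        · exact hnz x hx'
      · show cross (1 :: r) = ((c + 2 : ℕ) : ℤ)
        rw [cross_cons, hw]; push_cast; ring
    · obtain ⟨hpar, hnz, hw⟩ := hr
      refine ⟨⟨by simp, ?_, ?_⟩, ?_⟩
      · rw [Nat.even_iff]; simp only [List.length_cons]; omega
      · intro x hx
        rcases List.mem_cons.mp hx with rfl | hx'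
        · norm_num
        · exact hnz x hx'
      · show cross ((-1) :: r) = ((c + 2 : ℕ) : ℤ)
        rw [cross_cons, hw]; push_cast; ring
    · obtain ⟨⟨hne, heven, hnz⟩, hc⟩ := hx
      obtain ⟨a, r, rfl⟩ := List.exists_cons_of_ne_nil hne
      have ha : a ≠ 0 := hnz a (by simp)
      refine ⟨⟨by simp [incr], ?_, ?_⟩, ?_⟩
      · simpa [incr] using heven
      · intro y hy
        simp only [incr] at hy
        rcases List.mem_cons.mp hy with rfl | hy'
        · exact addsign_ne ha
        · exact hnz y (List.mem_cons_of_mem _ hy')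
      · show cross (incr (a :: r)) = ((c + 2 : ℕ) : ℤ)
        replace hc : cross (a :: r) = ((c : ℕ) : ℤ) := hc
        simp only [incr]
        rw [cross_cons] at hc ⊢
        rw [addsign_natAbs ha]
        have hwr : wgt (a + a.sign) r = wgt a r := by
          apply wgt_congr
          have := addsign_samesign ha
          nlinarith
        rw [hwr]
        omega

lemma incr_injOn_Ecross (c : ℕ) : Set.InjOn incr (Ecross c) := by
  rintro x ⟨⟨hnex, -, hnzx⟩, -⟩ y ⟨⟨hney, -, hnzy⟩, -⟩ h
  obtain ⟨a, r, rfl⟩ := List.exists_cons_of_ne_nil hnex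
  obtain ⟨b, q, rfl⟩ := List.exists_cons_of_ne_nil hney
  simp only [incr, List.cons.injEq] at h
  obtain ⟨h1, rfl⟩ := h
  rw [addsign_inj (hnzx a (by simp)) (hnzy b (by simp)) h1]

lemma eTot_rec (c : ℕ) : (Ecross (c + 2)).ncard = 2 * nn c + (Ecross c).ncard := by
  have fin1 : ((1 :: ·) '' PSet 1 1 c).Finite := (PSet_fin 1 1 c).image _
  have fin2 : (((-1) :: ·) '' PSet 1 (-1) c).Finite := (PSet_fin 1 (-1) c).image _
  have fin3 : (incr '' Ecross c).Finite := (Ecross_fin c).image _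
  have d12 : Disjoint ((1 :: ·) '' PSet 1 1 c) (((-1) :: ·) '' PSet 1 (-1) c) := by
    rw [Set.disjoint_left]
    rintro t h1 h2
    obtain ⟨r, rfl⟩ := head_of_mem_cons_image h1
    obtain ⟨r', heq⟩ := head_of_mem_cons_image h2
    have hh : (1 : ℤ) = -1 := (List.cons.injEq _ _ _ _ ▸ heq).1
    omega
  have d3 : Disjoint (((1 :: ·) '' PSet 1 1 c) ∪ (((-1) :: ·) '' PSet 1 (-1) c))
      (incr '' Ecross c) := by
    rw [Set.disjoint_left]
    rintro t h1 ⟨x, ⟨⟨hne, -, hnz⟩, -⟩, rfl⟩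
    obtain ⟨a, r, rfl⟩ := List.exists_cons_of_ne_nil hne
    have ha : a ≠ 0 := hnz a (by simp)
    have hge : 2 ≤ (a + a.sign).natAbs := by
      have := addsign_natAbs ha
      omega
    rcases h1 with h1 | h1
    · obtain ⟨r', heq⟩ := head_of_mem_cons_image h1
      simp only [incr, List.cons.injEq] at heq
      rw [heq.1] at hge
      omega
    · obtain ⟨r', heq⟩ := head_of_mem_cons_image h1
      simp only [incr, List.cons.injEq] at heq
      rw [heq.1] at hge
      omega
  rw [Ecross_decomp c, Set.ncard_union_eq d3 (fin1.union fin2) fin3,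
    Set.ncard_union_eq d12 fin1 fin2,
    Set.ncard_image_of_injective _ (List.cons_injective),
    Set.ncard_image_of_injective _ (List.cons_injective),
    Set.ncard_image_of_injOn (incr_injOn_Ecross c)]
  have h1 : (PSet 1 (-1) c).ncard = nn c := by
    have := PSet_neg_card 1 1 c
    simpa [nn] using this
  have h2 : (PSet 1 1 c).ncard = nn c := rfl
  rw [h1, h2]
  ring
lemma Ecross_small {c : ℕ} (hc : c < 2) : Ecross c = ∅ := by
  ext l
  simp only [Set.mem_empty_iff_false, iff_false]
  rintro ⟨⟨hne, heven, hnz⟩, hc'⟩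
  have hlen : 2 ≤ l.length := by
    rw [Nat.even_iff] at heven
    have : l.length ≠ 0 := fun h => hne (List.length_eq_zero_iff.mp h)
    omega
  have h1 := signChanges_le_cons 1 l
  have h2 := length_le_wgt (hnz := hnz) 1
  simp only [wgt] at h2
  omega

lemma nn_zero : nn 0 = 0 := by rw [nn, PSet_zero_odd, Set.ncard_empty]
lemma nn_one : nn 1 = 1 := by rw [nn, PSet_one_odd, Set.ncard_singleton]
lemma mm_zero : mm 0 = 1 := by rw [mm, PSet_zero_even, Set.ncard_singleton]
lemma mm_one : mm 1 = 0 := by rw [mm, PSet_one_even, Set.ncard_empty]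

lemma nn_mm_pow : ∀ k : ℕ, nn (k + 2) = 2 ^ k ∧ mm (k + 2) = 2 ^ k := by
  intro k
  induction k using Nat.strong_induction_on with
  | _ k ih =>
    match k with
    | 0 =>
      constructor
      · rw [nn_rec, nn_zero, mm_zero, mm_one]
        norm_num
      · rw [mm_rec, nn_zero, nn_one, PSet_zero_even]
        simp
    | 1 =>
      have h0 := (ih 0 (by omega))
      constructor
      · rw [nn_rec, mm_one, h0.2, nn_one]
        norm_num
      · rw [mm_rec, nn_one, h0.1, PSet_one_even, Set.empty_diff, Set.ncard_empty]
        norm_num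
    | (j + 2) =>
      have hj := ih j (by omega)
      have hj1 := ih (j + 1) (by omega)
      constructor
      · rw [show j + 2 + 2 = (j + 2) + 2 from rfl, nn_rec, hj.2, hj1.2, hj.1]
        ring
      · rw [show j + 2 + 2 = (j + 2) + 2 from rfl, mm_rec,
          Set.diff_singleton_eq_self (not_nil_mem_PSet (by omega)), hj.1, hj1.1]
        have : (PSet 0 1 (j + 2)).ncard = 2 ^ j := hj.2
        rw [this]
        ring

lemma eTot_val : ∀ k : ℕ, 3 * ((Ecross (k + 3)).ncard : ℤ) = 2 * (2 ^ (k + 1) - (-1 : ℤ) ^ (k + 1)) := by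
  intro k
  induction k using Nat.strong_induction_on with
  | _ k ih =>
    match k with
    | 0 =>
      have h := eTot_rec 1
      rw [nn_one, Ecross_small (by omega : (1 : ℕ) < 2), Set.ncard_empty] at h
      show 3 * ((Ecross (1 + 2)).ncard : ℤ) = 2 * (2 ^ (0 + 1) - (-1 : ℤ) ^ (0 + 1))
      rw [h]; norm_num
    | 1 =>
      have h0 := eTot_rec 0
      rw [nn_zero, Ecross_small (by omega : (0 : ℕ) < 2), Set.ncard_empty] at h0
      have h2 := eTot_rec 2
      rw [(nn_mm_pow 0).1, h0] at h2
      show 3 * ((Ecross (2 + 2)).ncard : ℤ) = 2 * (2 ^ (1 + 1) - (-1 : ℤ) ^ (1 + 1))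
      rw [h2]; norm_num
    | (j + 2) =>
      have hj := ih j (by omega)
      have h := eTot_rec (j + 3)
      rw [(nn_mm_pow (j + 1)).1] at h
      show 3 * ((Ecross ((j + 3) + 2)).ncard : ℤ) = 2 * (2 ^ (j + 2 + 1) - (-1 : ℤ) ^ (j + 2 + 1))
      rw [h]
      have hsign : (-1 : ℤ) ^ (j + 2 + 1) = (-1 : ℤ) ^ (j + 1) := by
        rw [show j + 2 + 1 = (j + 1) + 2 from rfl, pow_add]; norm_num
      have hpow : (2 : ℤ) ^ (j + 2 + 1) = 4 * 2 ^ (j + 1) := by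
        rw [show j + 2 + 1 = (j + 1) + 2 from rfl, pow_add]; ring
      rw [hsign, hpow]
      push_cast
      linarith [hj]

end ETA4
end ETA2

theorem eTot_closed_formula (c : ℕ) (hc : 3 ≤ c) :
    (3 : ℤ) * eTot c = 2 * (2 ^ (c - 2) - (-1 : ℤ) ^ (c - 2)) := by
  obtain ⟨k, rfl⟩ : ∃ k, c = k + 3 := ⟨c - 3, by omega⟩
  have h : k + 3 - 2 = k + 1 := by omega
  rw [h]
  exact ETA2.ETA4.eTot_val k
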